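/- Let X be a square-integrable random vector in R^d, F a sigma-algebra, and Y = E[X|F]. Then ‖E[XX^T] - E[YY^T]‖_F^2 ≤ ‖E[XX^T]‖_F^2 - ‖E[YY^T]‖_F^2. -/

import Mathlib

open MeasureTheory Matrix

section Aux
variable {Ω : Type*}

/-- Conditional expectation of an L² function is L². -/
lemma memL2_condexp_aux {m mΩ : MeasurableSpace Ω} {μ : Measure Ω} [IsFiniteMeasure μ] (hm : m ≤ mΩ)
    {f : Ω → ℝ} (hf : MemLp f 2 μ) : MemLp (μ[f|m]) 2 μ := by
  have hfi : Integrable f μ := hf.integrable one_le_two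
  haveI : SigmaFinite (μ.trim hm) := by infer_instance
  set g : Lp ℝ 2 μ := (condExpL2 ℝ ℝ hm (hf.toLp f) : Lp ℝ 2 μ) with hg
  have hgae : (g : Ω → ℝ) =ᵐ[μ] μ[f|m] := by
    refine ae_eq_condExp_of_forall_setIntegral_eq hm hfi ?_ ?_ ?_
    · intro s _ _
      exact ((Lp.memLp g).integrable one_le_two).integrableOn
    · intro s hs hμs
      rw [integral_condExpL2_eq hm (hf.toLp f) hs hμs.ne]
      exact setIntegral_congr_ae (hm s hs) ((hf.coeFn_toLp).mono fun x hx _ => hx)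
    · exact lpMeas.aestronglyMeasurable _
  exact (Lp.memLp g).ae_eq hgae

lemma intMul_aux {mΩ : MeasurableSpace Ω} {μ : Measure Ω} {f g : Ω → ℝ}
    (hf : MemLp f 2 μ) (hg : MemLp g 2 μ) :
    Integrable (fun ω => f ω * g ω) μ := by
  have h : MemLp (f • g) 1 μ := hg.smul hf (hpqr := ⟨by simp [one_div, ENNReal.inv_two_add_inv_two]⟩)
  exact memLp_one_iff_integrable.mp h

lemma quad_aux {mΩ : MeasurableSpace Ω} {μ : Measure Ω} {d : ℕ}
    (W : Ω → Fin d → ℝ) (hW : ∀ i, MemLp (fun ω => W ω i) 2 μ) (b : Fin d → ℝ) :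
    0 ≤ ∑ i, ∑ j, (∫ ω, W ω i * W ω j ∂μ) * (b i * b j) := by
  have hint : ∀ i j : Fin d, Integrable (fun ω => W ω i * W ω j * (b i * b j)) μ :=
    fun i j => (intMul_aux (hW i) (hW j)).mul_const _
  have h1 : ∀ i j : Fin d, (∫ ω, W ω i * W ω j ∂μ) * (b i * b j)
      = ∫ ω, W ω i * W ω j * (b i * b j) ∂μ := fun i j => (integral_mul_const _ _).symm
  have hsq : ∀ ω, (∑ i, W ω i * b i)^2 = ∑ i, ∑ j, W ω i * W ω j * (b i * b j) := by
    intro ω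
    rw [sq, Finset.sum_mul_sum]
    exact Finset.sum_congr rfl fun i _ => Finset.sum_congr rfl fun j _ => by ring
  calc (0:ℝ) ≤ ∫ ω, (∑ i, W ω i * b i)^2 ∂μ := integral_nonneg fun ω => sq_nonneg _
  _ = ∑ i, ∑ j, (∫ ω, W ω i * W ω j ∂μ) * (b i * b j) := by
      simp_rw [hsq]
      rw [integral_finset_sum _ (fun i _ => integrable_finset_sum _ (fun j _ => hint i j))]
      refine Finset.sum_congr rfl fun i _ => ?_
      rw [integral_finset_sum _ (fun j _ => hint i j)]
      exact Finset.sum_congr rfl fun j _ => (h1 i j).symm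

end Aux

/-- Covariance loss is bounded by the covariance increment:
`‖E[XX^T] - E[YY^T]‖_F² ≤ ‖E[XX^T]‖_F² - ‖E[YY^T]‖_F²` where `Y = E[X|F]`. -/
theorem stmt4 {Ω : Type*} {mΩ : MeasurableSpace Ω} (μ : Measure Ω) [IsProbabilityMeasure μ]
    {m : MeasurableSpace Ω} (hm : m ≤ mΩ) {d : ℕ}
    (X Y : Ω → Fin d → ℝ) (hX : ∀ i, MemLp (fun ω => X ω i) 2 μ)
    (hY : ∀ i, (fun ω => Y ω i) = μ[fun ω => X ω i | m]) :
    (((Matrix.of fun i j => ∫ ω, X ω i * X ω j ∂μ) -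
        (Matrix.of fun i j => ∫ ω, Y ω i * Y ω j ∂μ)) *
      ((Matrix.of fun i j => ∫ ω, X ω i * X ω j ∂μ) -
        (Matrix.of fun i j => ∫ ω, Y ω i * Y ω j ∂μ))ᵀ).trace
    ≤ ((Matrix.of fun i j => ∫ ω, X ω i * X ω j ∂μ) *
          (Matrix.of fun i j => ∫ ω, X ω i * X ω j ∂μ)ᵀ).trace -
      ((Matrix.of fun i j => ∫ ω, Y ω i * Y ω j ∂μ) *
          (Matrix.of fun i j => ∫ ω, Y ω i * Y ω j ∂μ)ᵀ).trace := by
  haveI : SigmaFinite (μ.trim hm) := by infer_instance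
  have hY2 : ∀ i, MemLp (fun ω => Y ω i) 2 μ := fun i => by
    rw [hY i]; exact memL2_condexp_aux hm (hX i)
  have hYm : ∀ i, StronglyMeasurable[m] (fun ω => Y ω i) := fun i => by
    rw [hY i]; exact stronglyMeasurable_condExp
  have hZ2 : ∀ i, MemLp (fun ω => X ω i - Y ω i) 2 μ := fun i => (hX i).sub (hY2 i)
  have key : ∀ i j, ∫ ω, Y ω i * X ω j ∂μ = ∫ ω, Y ω i * Y ω j ∂μ := by
    intro i j
    have hXj : Integrable (fun ω => X ω j) μ := (hX j).integrable one_le_two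
    have hfg : Integrable ((fun ω => Y ω i) * fun ω => X ω j) μ := intMul_aux (hY2 i) (hX j)
    have h := condExp_mul_of_stronglyMeasurable_left (hYm i) hfg hXj
    calc ∫ ω, Y ω i * X ω j ∂μ
        = ∫ ω, (μ[(fun ω => Y ω i) * (fun ω => X ω j)|m]) ω ∂μ := (integral_condExp hm).symm
      _ = ∫ ω, ((fun ω => Y ω i) * μ[(fun ω => X ω j)|m]) ω ∂μ := integral_congr_ae h
      _ = ∫ ω, Y ω i * Y ω j ∂μ := by rw [← hY j]; rfl
  have keyC : ∀ i j, ∫ ω, (X ω i - Y ω i) * (X ω j - Y ω j) ∂μ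
      = (∫ ω, X ω i * X ω j ∂μ) - ∫ ω, Y ω i * Y ω j ∂μ := by
    intro i j
    have e : ∀ ω, (X ω i - Y ω i) * (X ω j - Y ω j)
        = X ω i * X ω j - Y ω i * X ω j - (Y ω j * X ω i - Y ω j * Y ω i) := fun ω => by ring
    simp_rw [e]
    have I1 : Integrable (fun ω => X ω i * X ω j - Y ω i * X ω j) μ :=
      (intMul_aux (hX i) (hX j)).sub (intMul_aux (hY2 i) (hX j))
    have I2 : Integrable (fun ω => Y ω j * X ω i - Y ω j * Y ω i) μ :=
      (intMul_aux (hY2 j) (hX i)).sub (intMul_aux (hY2 j) (hY2 i))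
    rw [integral_sub I1 I2,
      integral_sub (intMul_aux (hX i) (hX j)) (intMul_aux (hY2 i) (hX j)),
      integral_sub (intMul_aux (hY2 j) (hX i)) (intMul_aux (hY2 j) (hY2 i)),
      key i j, key j i]
    have : ∫ ω, Y ω j * Y ω i ∂μ = ∫ ω, Y ω i * Y ω j ∂μ := by simp_rw [mul_comm]
    rw [this]; ring
  have main : 0 ≤ ∑ i, ∑ j,
      ((∫ ω, X ω i * X ω j ∂μ) - ∫ ω, Y ω i * Y ω j ∂μ) * (∫ ω, Y ω i * Y ω j ∂μ) := by
    have h1 : ∀ i j : Fin d,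
        ((∫ ω, X ω i * X ω j ∂μ) - ∫ ω, Y ω i * Y ω j ∂μ) * (∫ ω, Y ω i * Y ω j ∂μ)
        = ∫ ω, ((∫ ω', X ω' i * X ω' j ∂μ) - ∫ ω', Y ω' i * Y ω' j ∂μ) * (Y ω i * Y ω j) ∂μ :=
      fun i j => (integral_const_mul _ _).symm
    simp_rw [h1]
    have hint : ∀ i j : Fin d, Integrable
        (fun ω => ((∫ ω', X ω' i * X ω' j ∂μ) - ∫ ω', Y ω' i * Y ω' j ∂μ) * (Y ω i * Y ω j)) μ :=
      fun i j => (intMul_aux (hY2 i) (hY2 j)).const_mul _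
    have h2 : ∑ i, ∑ j, ∫ ω, ((∫ ω', X ω' i * X ω' j ∂μ) - ∫ ω', Y ω' i * Y ω' j ∂μ)
          * (Y ω i * Y ω j) ∂μ
        = ∫ ω, ∑ i, ∑ j, ((∫ ω', X ω' i * X ω' j ∂μ) - ∫ ω', Y ω' i * Y ω' j ∂μ)
          * (Y ω i * Y ω j) ∂μ := by
      rw [integral_finset_sum _ (fun i _ => integrable_finset_sum _ (fun j _ => hint i j))]
      exact Finset.sum_congr rfl fun i _ => (integral_finset_sum _ (fun j _ => hint i j)).symm
    rw [h2]
    refine integral_nonneg fun ω => ?_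
    have h := quad_aux (fun ω' i => X ω' i - Y ω' i) hZ2 (Y ω)
    simp_rw [keyC] at h
    exact h
  simp only [Matrix.trace, Matrix.diag_apply, Matrix.mul_apply, Matrix.transpose_apply,
    Matrix.sub_apply, Matrix.of_apply]
  simp_rw [show ∀ x y : ℝ, (x - y) * (x - y) = x*x - y*y - 2*((x-y)*y) from fun x y => by ring,
    Finset.sum_sub_distrib, ← Finset.mul_sum]
  linarith [main]
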